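/- Let f : D → ℝ be piecewise linear-quadratic on a convex polyhedral domain D that is the union of polyhedra P¹, …, P^I with associated quadratic pieces q₁, …, q_I. For each i, j let L_{ji} be a Lipschitz constant of ∇q_j − ∇q_i on D (with respect to the Euclidean norm) and set L_i := max_{1≤j≤I} L_{ji}. Then for all x ∈ D: f(x) = min_{1≤i≤I} { q_i(x) + dist₁(x;Pⁱ) · max_{1≤j≤I} ‖∇q_j(x) − ∇q_i(x)‖₁ + (3L_i/2)·[dist₁(x;Pⁱ)]² }, where dist₁(x;S) := min_{s∈S} ‖s − x‖₁. -/

import Mathlib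

open Filter Topology Set

noncomputable section

/-- The 1-norm on `Fin n → ℝ`. -/
def n1 {n : ℕ} (v : Fin n → ℝ) : ℝ := ∑ i, |v i|

/-- Euclidean norm on `Fin n → ℝ`. -/
def n2 {n : ℕ} (v : Fin n → ℝ) : ℝ := Real.sqrt (∑ i, v i ^ 2)

/-- A polyhedron `{x : Ax ≤ b}`. -/
def IsPolyhedron {n : ℕ} (S : Set (Fin n → ℝ)) : Prop :=
  ∃ (m : ℕ) (A : Matrix (Fin m) (Fin n) ℝ) (b : Fin m → ℝ),
    S = {x | ∀ i, (∑ j, A i j * x j) ≤ b i}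

/-- The 1-norm distance function to a set `S`. -/
def dist1 {n : ℕ} (x : Fin n → ℝ) (S : Set (Fin n → ℝ)) : ℝ :=
  sInf ((fun s => n1 (s - x)) '' S)

/-- The quadratic function `q(x) = ½ xᵀQx + cᵀx + α`. -/
def quadF {n : ℕ} (Q : Matrix (Fin n) (Fin n) ℝ) (c : Fin n → ℝ) (α : ℝ)
    (x : Fin n → ℝ) : ℝ :=
  (1/2) * (∑ i, ∑ j, Q i j * x i * x j) + (∑ i, c i * x i) + α

/-- The gradient `∇q(x) = Qx + c` (for symmetric `Q`). -/
def gradQ {n : ℕ} (Q : Matrix (Fin n) (Fin n) ℝ) (c : Fin n → ℝ) (x : Fin n → ℝ) :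
    Fin n → ℝ :=
  fun i => (∑ j, Q i j * x j) + c i


/-! ### Auxiliary lemmas on the norms `n1` and `n2` -/

lemma n1_nonneg {n : ℕ} (v : Fin n → ℝ) : 0 ≤ n1 v :=
  Finset.sum_nonneg fun _ _ => abs_nonneg _

lemma n1_zero {n : ℕ} : n1 (0 : Fin n → ℝ) = 0 := by simp [n1]

lemma n2_nonneg {n : ℕ} (v : Fin n → ℝ) : 0 ≤ n2 v := Real.sqrt_nonneg _

lemma n2_le_n1 {n : ℕ} (v : Fin n → ℝ) : n2 v ≤ n1 v := by
  have h : n1 v = Real.sqrt ((∑ i, |v i|)^2) := (Real.sqrt_sq (n1_nonneg v)).symm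
  rw [n2, h]
  apply Real.sqrt_le_sqrt
  calc ∑ i, v i ^ 2 = ∑ i, |v i| ^ 2 := by simp [sq_abs]
    _ ≤ (∑ i, |v i|)^2 := Finset.sum_sq_le_sq_sum_of_nonneg fun i _ => abs_nonneg _

lemma n2_smul {n : ℕ} (t : ℝ) (v : Fin n → ℝ) : n2 (t • v) = |t| * n2 v := by
  simp only [n2, Pi.smul_apply, smul_eq_mul, mul_pow]
  rw [← Finset.mul_sum, Real.sqrt_mul (sq_nonneg t), Real.sqrt_sq_eq_abs]

lemma n2_triangle {n : ℕ} (a b : Fin n → ℝ) : n2 (a + b) ≤ n2 a + n2 b := by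
  have key : ∀ v : Fin n → ℝ, n2 v = ‖(WithLp.equiv 2 (Fin n → ℝ)).symm v‖ := by
    intro v
    rw [EuclideanSpace.norm_eq]
    simp [n2, Real.norm_eq_abs, sq_abs]
  rw [key, key, key]
  rw [show (WithLp.equiv 2 (Fin n → ℝ)).symm (a + b)
      = (WithLp.equiv 2 (Fin n → ℝ)).symm a + (WithLp.equiv 2 (Fin n → ℝ)).symm b from rfl]
  exact norm_add_le _ _

lemma n2_pos {n : ℕ} {v : Fin n → ℝ} (h : v ≠ 0) : 0 < n2 v := by
  apply Real.sqrt_pos.2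
  obtain ⟨k, hk⟩ := Function.ne_iff.1 h
  have hk' : v k ≠ 0 := by simpa using hk
  exact Finset.sum_pos' (fun i _ => sq_nonneg _)
    ⟨k, Finset.mem_univ k, by positivity⟩

lemma cauchy_schwarz {n : ℕ} (v w : Fin n → ℝ) : |∑ i, v i * w i| ≤ n2 v * n2 w := by
  rw [← Real.sqrt_sq_eq_abs, n2, n2,
    ← Real.sqrt_mul (Finset.sum_nonneg fun i _ => sq_nonneg _)]
  exact Real.sqrt_le_sqrt (Finset.sum_mul_sq_le_sq_mul_sq _ _ _)

/-! ### Polyhedra are convex and closed -/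

lemma IsPolyhedron.convex {n : ℕ} {S : Set (Fin n → ℝ)} (h : IsPolyhedron S) :
    Convex ℝ S := by
  obtain ⟨m, A, b, rfl⟩ := h
  intro x hx y hy a t ha ht hat
  intro i
  have hx' := hx i
  have hy' := hy i
  simp only [Pi.add_apply, Pi.smul_apply, smul_eq_mul]
  have : ∑ j, A i j * (a * x j + t * y j) = a * (∑ j, A i j * x j) + t * (∑ j, A i j * y j) := by
    rw [Finset.mul_sum, Finset.mul_sum, ← Finset.sum_add_distrib]
    exact Finset.sum_congr rfl fun j _ => by ring
  rw [this]
  calc a * (∑ j, A i j * x j) + t * (∑ j, A i j * y j) ≤ a * b i + t * b i := by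
        gcongr
    _ = b i := by rw [← add_mul, hat, one_mul]

lemma IsPolyhedron.closed {n : ℕ} {S : Set (Fin n → ℝ)} (h : IsPolyhedron S) :
    IsClosed S := by
  obtain ⟨m, A, b, rfl⟩ := h
  have : {x : Fin n → ℝ | ∀ i, (∑ j, A i j * x j) ≤ b i}
      = ⋂ i, {x | (∑ j, A i j * x j) ≤ b i} := by
    ext x; simp [Set.mem_iInter]
  rw [this]
  exact isClosed_iInter fun i => isClosed_le (by continuity) continuous_const

/-! ### Basic facts about the 1-norm distance -/

lemma dist1_nonneg {n : ℕ} (x : Fin n → ℝ) {S : Set (Fin n → ℝ)} (hS : S.Nonempty) :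
    0 ≤ dist1 x S :=
  le_csInf (hS.image _) (by rintro y ⟨s, _, rfl⟩; exact n1_nonneg _)

lemma dist1_eq_zero {n : ℕ} {x : Fin n → ℝ} {S : Set (Fin n → ℝ)} (hx : x ∈ S) :
    dist1 x S = 0 := by
  have h0 : (0:ℝ) ∈ (fun s => n1 (s - x)) '' S := ⟨x, hx, by simp [n1]⟩
  have hb : BddBelow ((fun s => n1 (s - x)) '' S) :=
    ⟨0, by rintro y ⟨s, _, rfl⟩; exact n1_nonneg _⟩
  exact le_antisymm (csInf_le hb h0) (dist1_nonneg x ⟨x, hx⟩)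

lemma dist1_approx {n : ℕ} (x : Fin n → ℝ) {S : Set (Fin n → ℝ)} (hS : S.Nonempty)
    {ε : ℝ} (hε : 0 < ε) : ∃ y ∈ S, n1 (y - x) < dist1 x S + ε := by
  obtain ⟨a, ⟨y, hy, rfl⟩, ha⟩ := Real.lt_sInf_add_pos (hS.image _) hε
  exact ⟨y, hy, ha⟩

/-! ### Lines and polyhedra -/

lemma line_preimage_convex {n : ℕ} {P : Set (Fin n → ℝ)} (hP : Convex ℝ P)
    (p v : Fin n → ℝ) : Convex ℝ {u : ℝ | p + u • v ∈ P} := by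
  intro u1 h1 u2 h2 a b ha hb hab
  have key : p + (a • u1 + b • u2) • v = a • (p + u1 • v) + b • (p + u2 • v) := by
    funext k
    simp only [Pi.add_apply, Pi.smul_apply, smul_eq_mul]
    linear_combination (p k) * hab.symm
  show p + (a • u1 + b • u2) • v ∈ P
  rw [key]
  exact hP h1 h2 ha hb hab

lemma line_preimage_closed {n : ℕ} {P : Set (Fin n → ℝ)} (hP : IsClosed P)
    (p v : Fin n → ℝ) : IsClosed {u : ℝ | p + u • v ∈ P} :=
  hP.preimage (continuous_const.add (continuous_id.smul continuous_const))

/-- Along a line, a finite cover by closed convex sets provides, at each parameter `t < 1`,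
one set containing a whole segment `[t, s]` to the right of `t`. -/
lemma segment_piece {n N : ℕ} (P : Fin (N + 1) → Set (Fin n → ℝ))
    (hPc : ∀ j, IsClosed (P j)) (hPconv : ∀ j, Convex ℝ (P j))
    (p v : Fin n → ℝ) {t : ℝ} (ht : t < 1)
    (hcov : ∀ u ∈ Icc t (1:ℝ), ∃ j, p + u • v ∈ P j) :
    ∃ j s, t < s ∧ s ≤ 1 ∧ ∀ u ∈ Icc t s, p + u • v ∈ P j := by
  by_contra hcon
  push_neg at hcon
  have hright : ∀ j : Fin (N + 1), ∃ δ > (0:ℝ), ∀ u, t < u → u ≤ t + δ → u ≤ 1 →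
      p + u • v ∉ P j := by
    intro j
    set C := {u : ℝ | p + u • v ∈ P j} with hC
    by_cases ht' : t ∈ C
    · refine ⟨1, one_pos, fun u hu1 _ hu3 hu4 => ?_⟩
      obtain ⟨w, hw, hwP⟩ := hcon j u hu1 hu3
      have hIcc : Icc t u ⊆ C :=
        ((line_preimage_convex (hPconv j) p v).ordConnected).out ht' hu4
      exact hwP (hIcc hw)
    · have hopen : IsOpen Cᶜ := (line_preimage_closed (hPc j) p v).isOpen_compl
      obtain ⟨ε, hε, hball⟩ := Metric.isOpen_iff.1 hopen t ht'
      refine ⟨ε/2, by linarith, fun u hu1 hu2 _ hu4 => ?_⟩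
      have : u ∈ Metric.ball t ε := by
        rw [Metric.mem_ball, Real.dist_eq, abs_of_pos (by linarith)]
        linarith
      exact hball this hu4
  choose δ hδpos hδ using hright
  set δ₀ := Finset.univ.inf' Finset.univ_nonempty δ with hδ₀
  have hδ₀pos : 0 < δ₀ := by
    rw [hδ₀, Finset.lt_inf'_iff]
    exact fun j _ => hδpos j
  set s₀ := min (t + δ₀) 1 with hs₀
  have hts₀ : t < s₀ := lt_min (by linarith) ht
  have hs₀1 : s₀ ≤ 1 := min_le_right _ _
  obtain ⟨j, hj⟩ := hcov s₀ ⟨hts₀.le, hs₀1⟩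
  exact hδ j s₀ hts₀ (le_trans (min_le_left _ _)
    (by have : δ₀ ≤ δ j := Finset.inf'_le _ (Finset.mem_univ j); linarith)) hs₀1 hj

/-! ### Derivative of a quadratic along a line -/

lemma quad_line_deriv {n : ℕ} (Q : Matrix (Fin n) (Fin n) ℝ)
    (hQ : ∀ k l, Q k l = Q l k) (c : Fin n → ℝ) (α : ℝ) (p v : Fin n → ℝ) (t : ℝ) :
    HasDerivAt (fun s : ℝ => quadF Q c α (p + s • v))
      (∑ k, gradQ Q c (p + t • v) k * v k) t := by
  have h1 : ∀ k : Fin n, HasDerivAt (fun s : ℝ => p k + s * v k) (v k) t := by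
    intro k
    simpa using ((hasDerivAt_id t).mul_const (v k)).const_add (p k)
  have hsum : HasDerivAt
      (fun s : ℝ => ∑ i, ∑ j, Q i j * (p i + s * v i) * (p j + s * v j))
      (∑ i, ∑ j, ((Q i j * v i) * (p j + t * v j) + (Q i j * (p i + t * v i)) * v j)) t := by
    apply HasDerivAt.fun_sum
    intro i _
    apply HasDerivAt.fun_sum
    intro j _
    exact ((h1 i).const_mul (Q i j)).mul (h1 j)
  have hlin : HasDerivAt (fun s : ℝ => ∑ i, c i * (p i + s * v i)) (∑ i, c i * v i) t := by
    apply HasDerivAt.fun_sum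
    intro i _
    simpa using (h1 i).const_mul (c i)
  have hfull : HasDerivAt (fun s : ℝ => quadF Q c α (p + s • v))
      ((1/2) * (∑ i, ∑ j, ((Q i j * v i) * (p j + t * v j) + (Q i j * (p i + t * v i)) * v j))
        + (∑ i, c i * v i)) t := by
    have h := ((hsum.const_mul (1/2 : ℝ)).add hlin).add_const α
    have hfun : (fun s : ℝ => quadF Q c α (p + s • v))
        = fun s : ℝ => ((1/2) * (∑ i, ∑ j, Q i j * (p i + s * v i) * (p j + s * v j))
            + ∑ i, c i * (p i + s * v i)) + α := by
      funext s
      simp only [quadF, Pi.add_apply, Pi.smul_apply, smul_eq_mul]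
    rw [hfun]
    exact h
  convert hfull using 1
  set z : Fin n → ℝ := fun k => p k + t * v k with hz
  have hzz : ∀ k, (p + t • v) k = z k := fun k => rfl
  have e1 : ∑ k, gradQ Q c (p + t • v) k * v k
      = (∑ k, (∑ j, Q k j * z j) * v k) + ∑ k, c k * v k := by
    rw [← Finset.sum_add_distrib]
    refine Finset.sum_congr rfl fun k _ => ?_
    simp only [gradQ, hzz]
    ring
  have e2 : ∑ i, ∑ j, (Q i j * v i) * z j = ∑ k, (∑ j, Q k j * z j) * v k := by
    refine Finset.sum_congr rfl fun k _ => ?_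
    rw [Finset.sum_mul]
    exact Finset.sum_congr rfl fun j _ => by ring
  have e3 : ∑ i, ∑ j, (Q i j * z i) * v j = ∑ k, (∑ j, Q k j * z j) * v k := by
    rw [Finset.sum_comm]
    refine Finset.sum_congr rfl fun j _ => ?_
    rw [Finset.sum_mul]
    refine Finset.sum_congr rfl fun i _ => ?_
    rw [hQ i j]
  have e4 : ∑ i, ∑ j, ((Q i j * v i) * z j + (Q i j * z i) * v j)
      = 2 * ∑ k, (∑ j, Q k j * z j) * v k := by
    have : ∀ i : Fin n, ∑ j, ((Q i j * v i) * z j + (Q i j * z i) * v j)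
        = (∑ j, (Q i j * v i) * z j) + ∑ j, (Q i j * z i) * v j := fun i =>
      Finset.sum_add_distrib
    rw [Finset.sum_congr rfl fun i _ => this i, Finset.sum_add_distrib, e2, e3]
    ring
  rw [e1]
  calc (∑ k, (∑ j, Q k j * z j) * v k) + ∑ k, c k * v k
      = (1/2) * (2 * ∑ k, (∑ j, Q k j * z j) * v k) + ∑ k, c k * v k := by ring
    _ = (1/2) * (∑ i, ∑ j, ((Q i j * v i) * (p j + t * v j) + (Q i j * (p i + t * v i)) * v j))
        + ∑ i, c i * v i := by rw [← e4]

/-! ### The key estimate along a segment -/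

lemma key_bound {n N : ℕ} {D : Set (Fin n → ℝ)} (hDconv : Convex ℝ D)
    {P : Fin (N + 1) → Set (Fin n → ℝ)}
    (hPc : ∀ j, IsClosed (P j)) (hPconv : ∀ j, Convex ℝ (P j))
    (hPD : ∀ j, P j ⊆ D) (hcov : ∀ z ∈ D, ∃ j, z ∈ P j)
    {Qm : Fin (N + 1) → Matrix (Fin n) (Fin n) ℝ} (hQ : ∀ i k l, Qm i k l = Qm i l k)
    {c : Fin (N + 1) → Fin n → ℝ} {α : Fin (N + 1) → ℝ}
    {f : (Fin n → ℝ) → ℝ} (hf : ContinuousOn f D)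
    (hfq : ∀ i, ∀ x ∈ P i, f x = quadF (Qm i) (c i) (α i) x)
    {L : Fin (N + 1) → Fin (N + 1) → ℝ}
    (hL : ∀ j i, ∀ x ∈ D, ∀ y ∈ D,
      n2 ((gradQ (Qm j) (c j) x - gradQ (Qm i) (c i) x) -
          (gradQ (Qm j) (c j) y - gradQ (Qm i) (c i) y)) ≤ L j i * n2 (x - y))
    (i : Fin (N + 1)) {x : Fin n → ℝ} (hx : x ∈ D) {y : Fin n → ℝ} (hy : y ∈ P i)
    {M Λ : ℝ} (hM : ∀ j, n1 (gradQ (Qm j) (c j) x - gradQ (Qm i) (c i) x) ≤ M)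
    (hM0 : 0 ≤ M) (hΛ : ∀ j, L j i ≤ Λ) (hΛ0 : 0 ≤ Λ) :
    f x - quadF (Qm i) (c i) (α i) x ≤ M * n1 (y - x) + Λ * n1 (y - x) ^ 2 := by
  classical
  set w : Fin n → ℝ := y - x with hwdef
  have hyD : y ∈ D := hPD i hy
  set K : ℝ := (M + Λ * n1 w) * n1 w with hKdef
  set zr : ℝ → (Fin n → ℝ) := fun u => y + u • (-w) with hzrdef
  have hzr0 : zr 0 = y := by funext k; simp [hzrdef]
  have hzr1 : zr 1 = x := by
    funext k
    simp [hzrdef, hwdef]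
  have hzrD : ∀ u ∈ Icc (0:ℝ) 1, zr u ∈ D := by
    intro u hu
    have : zr u = (1 - u) • y + u • x := by
      funext k
      simp [hzrdef, hwdef]
      ring
    rw [this]
    exact hDconv hyD hx (by linarith [hu.2]) hu.1 (by ring)
  have hzrcont : Continuous zr := continuous_const.add (continuous_id.smul continuous_const)
  set F : ℝ → ℝ := fun u => f (zr u) - quadF (Qm i) (c i) (α i) (zr u) with hFdef
  have hquadcont : ∀ j : Fin (N+1), Continuous (fun u : ℝ => quadF (Qm j) (c j) (α j) (zr u)) := by
    intro j
    rw [continuous_iff_continuousAt]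
    intro u
    exact (quad_line_deriv (Qm j) (hQ j) (c j) (α j) y (-w) u).continuousAt
  have hFcont : ContinuousOn F (Icc 0 1) := by
    apply ContinuousOn.sub
    · exact hf.comp hzrcont.continuousOn hzrD
    · exact (hquadcont i).continuousOn
  have hF0 : F 0 = 0 := by
    simp [hFdef, hzr0, hfq i y hy]
  have bound : ∀ u ∈ Ico (0:ℝ) 1, ∀ r, K < r → ∃ᶠ z in 𝓝[>] u, slope F u z < r := by
    intro u hu r hr
    have hcov' : ∀ u' ∈ Icc u (1:ℝ), ∃ j, y + u' • (-w) ∈ P j := by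
      intro u' hu'
      exact hcov _ (hzrD u' ⟨le_trans hu.1 hu'.1, hu'.2⟩)
    obtain ⟨j, s, hus, hs1, hseg⟩ := segment_piece P hPc hPconv y (-w) hu.2 hcov'
    set ζ : Fin n → ℝ := zr u with hζdef
    have hζD : ζ ∈ D := hzrD u ⟨hu.1, hu.2.le⟩
    set dval : ℝ := (∑ k, gradQ (Qm j) (c j) ζ k * (-w) k)
      - (∑ k, gradQ (Qm i) (c i) ζ k * (-w) k) with hdvaldef
    have hGderiv : HasDerivAt (fun u' : ℝ =>
        quadF (Qm j) (c j) (α j) (zr u') - quadF (Qm i) (c i) (α i) (zr u')) dval u :=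
      (quad_line_deriv (Qm j) (hQ j) (c j) (α j) y (-w) u).sub
        (quad_line_deriv (Qm i) (hQ i) (c i) (α i) y (-w) u)
    have hmem : Icc u s ∈ 𝓝[≥] u := Icc_mem_nhdsGE_of_mem ⟨le_refl u, hus⟩
    have hFG : ∀ u' ∈ Icc u s, F u' =
        quadF (Qm j) (c j) (α j) (zr u') - quadF (Qm i) (c i) (α i) (zr u') := by
      intro u' hu'
      have : zr u' ∈ P j := hseg u' hu'
      simp only [hFdef]
      rw [hfq j _ this]
    have hFd : HasDerivWithinAt F dval (Ici u) u := by
      apply HasDerivWithinAt.congr_of_eventuallyEq hGderiv.hasDerivWithinAt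
      · exact Filter.eventually_of_mem hmem hFG
      · exact hFG u ⟨le_refl u, hus.le⟩
    have hdK : dval ≤ K := by
      have h1 : dval = ∑ k, ((gradQ (Qm i) (c i) ζ - gradQ (Qm j) (c j) ζ) k) * w k := by
        rw [hdvaldef, ← Finset.sum_sub_distrib]
        refine Finset.sum_congr rfl fun k _ => ?_
        simp only [Pi.sub_apply, Pi.neg_apply]
        ring
      have h2 : dval ≤ n2 (gradQ (Qm i) (c i) ζ - gradQ (Qm j) (c j) ζ) * n2 w := by
        rw [h1]
        exact le_trans (le_abs_self _) (cauchy_schwarz _ _)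
      have hneg : n2 (gradQ (Qm i) (c i) ζ - gradQ (Qm j) (c j) ζ)
          = n2 (gradQ (Qm j) (c j) ζ - gradQ (Qm i) (c i) ζ) := by
        have : gradQ (Qm i) (c i) ζ - gradQ (Qm j) (c j) ζ
            = (-1 : ℝ) • (gradQ (Qm j) (c j) ζ - gradQ (Qm i) (c i) ζ) := by
          funext k
          simp only [Pi.sub_apply, Pi.smul_apply, smul_eq_mul, neg_mul, one_mul]
          ring
        rw [this, n2_smul]
        simp
      have htri : n2 (gradQ (Qm j) (c j) ζ - gradQ (Qm i) (c i) ζ)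
          ≤ n2 ((gradQ (Qm j) (c j) ζ - gradQ (Qm i) (c i) ζ)
              - (gradQ (Qm j) (c j) x - gradQ (Qm i) (c i) x))
            + n2 (gradQ (Qm j) (c j) x - gradQ (Qm i) (c i) x) := by
        have := n2_triangle ((gradQ (Qm j) (c j) ζ - gradQ (Qm i) (c i) ζ)
              - (gradQ (Qm j) (c j) x - gradQ (Qm i) (c i) x))
            (gradQ (Qm j) (c j) x - gradQ (Qm i) (c i) x)
        rwa [sub_add_cancel] at this
      have hLip : n2 ((gradQ (Qm j) (c j) ζ - gradQ (Qm i) (c i) ζ)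
              - (gradQ (Qm j) (c j) x - gradQ (Qm i) (c i) x)) ≤ L j i * n2 (ζ - x) :=
        hL j i ζ hζD x hx
      have hζx : ζ - x = (1 - u) • w := by
        funext k
        simp [hζdef, hzrdef, hwdef]
        ring
      have hζxn : n2 (ζ - x) ≤ n1 w := by
        rw [hζx, n2_smul, abs_of_nonneg (by linarith [hu.2] : (0:ℝ) ≤ 1 - u)]
        calc (1 - u) * n2 w ≤ 1 * n2 w := by
              apply mul_le_mul_of_nonneg_right _ (n2_nonneg w)
              linarith [hu.1]
          _ = n2 w := one_mul _
          _ ≤ n1 w := n2_le_n1 w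
      have hstep : n2 (gradQ (Qm j) (c j) ζ - gradQ (Qm i) (c i) ζ) ≤ M + Λ * n1 w := by
        have e1 : n2 (gradQ (Qm j) (c j) x - gradQ (Qm i) (c i) x) ≤ M :=
          le_trans (n2_le_n1 _) (hM j)
        have e2 : L j i * n2 (ζ - x) ≤ Λ * n1 w := by
          rcases le_or_gt 0 (L j i) with h | h
          · calc L j i * n2 (ζ - x) ≤ L j i * n1 w :=
                  mul_le_mul_of_nonneg_left hζxn h
              _ ≤ Λ * n1 w := mul_le_mul_of_nonneg_right (hΛ j) (n1_nonneg w)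
          · have : L j i * n2 (ζ - x) ≤ 0 :=
              mul_nonpos_of_nonpos_of_nonneg h.le (n2_nonneg _)
            exact le_trans this (mul_nonneg hΛ0 (n1_nonneg w))
        linarith
      calc dval ≤ n2 (gradQ (Qm i) (c i) ζ - gradQ (Qm j) (c j) ζ) * n2 w := h2
        _ = n2 (gradQ (Qm j) (c j) ζ - gradQ (Qm i) (c i) ζ) * n2 w := by rw [hneg]
        _ ≤ (M + Λ * n1 w) * n2 w := mul_le_mul_of_nonneg_right hstep (n2_nonneg w)
        _ ≤ (M + Λ * n1 w) * n1 w := by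
            apply mul_le_mul_of_nonneg_left (n2_le_n1 w)
            have := mul_nonneg hΛ0 (n1_nonneg w)
            linarith
        _ = K := hKdef.symm
    exact hFd.liminf_right_slope_le (lt_of_le_of_lt hdK hr)
  have hB' : ∀ u ∈ Ico (0:ℝ) 1, HasDerivWithinAt (fun u : ℝ => K * u) K (Ici u) u := by
    intro u _
    simpa using ((hasDerivAt_id u).const_mul K).hasDerivWithinAt
  have hmain := image_le_of_liminf_slope_right_le_deriv_boundary hFcont
    (by rw [hF0]; simp : F 0 ≤ K * 0)
    (continuous_const.mul continuous_id).continuousOn hB' bound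
    (right_mem_Icc.2 zero_le_one)
  have hF1 : F 1 = f x - quadF (Qm i) (c i) (α i) x := by
    simp only [hFdef, hzr1]
  rw [hF1, mul_one] at hmain
  calc f x - quadF (Qm i) (c i) (α i) x ≤ K := hmain
    _ = M * n1 w + Λ * n1 w ^ 2 := by rw [hKdef]; ring
    _ = M * n1 (y - x) + Λ * n1 (y - x) ^ 2 := by rw [hwdef]

/-- The 1-norm difference-of-convex representation of a PLQ function on a
convex polyhedral domain `D = ⋃ᵢ Pⁱ`:
`f(x) = minᵢ { qᵢ(x) + dist₁(x;Pⁱ)·maxⱼ ‖∇qⱼ(x) − ∇qᵢ(x)‖₁ + (3Lᵢ/2)·dist₁(x;Pⁱ)² }`. -/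
theorem stmt5 {n I : ℕ} (D : Set (Fin n → ℝ)) (hD : IsPolyhedron D)
    (P : Fin (I + 1) → Set (Fin n → ℝ)) (hP : ∀ i, IsPolyhedron (P i))
    (hne : ∀ i, (P i).Nonempty) (hcover : D = ⋃ i, P i)
    (Qm : Fin (I + 1) → Matrix (Fin n) (Fin n) ℝ) (hQ : ∀ i k l, Qm i k l = Qm i l k)
    (c : Fin (I + 1) → Fin n → ℝ) (α : Fin (I + 1) → ℝ)
    (f : (Fin n → ℝ) → ℝ) (hf : ContinuousOn f D)
    (hfq : ∀ i, ∀ x ∈ P i, f x = quadF (Qm i) (c i) (α i) x)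
    -- `L j i` is a Lipschitz constant of `∇q_j − ∇q_i` on `D` w.r.t. the Euclidean norm
    (L : Fin (I + 1) → Fin (I + 1) → ℝ)
    (hL : ∀ j i, ∀ x ∈ D, ∀ y ∈ D,
      n2 ((gradQ (Qm j) (c j) x - gradQ (Qm i) (c i) x) -
          (gradQ (Qm j) (c j) y - gradQ (Qm i) (c i) y)) ≤ L j i * n2 (x - y))
    -- `Li i = max_j L j i`
    (Li : Fin (I + 1) → ℝ)
    (hLi : ∀ i, Li i = Finset.univ.sup' Finset.univ_nonempty (fun j => L j i)) :
    ∀ x ∈ D,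
      let expr : Fin (I + 1) → ℝ := fun i =>
        quadF (Qm i) (c i) (α i) x +
        dist1 x (P i) *
          (Finset.univ.sup' Finset.univ_nonempty
            (fun j => n1 (gradQ (Qm j) (c j) x - gradQ (Qm i) (c i) x))) +
        (3 * Li i / 2) * (dist1 x (P i)) ^ 2
      (∀ i, f x ≤ expr i) ∧ (∃ i, f x = expr i) := by
  intro x hx
  intro expr
  have hPD : ∀ k, P k ⊆ D := by
    intro k
    rw [hcover]
    exact subset_iUnion P k
  have hcov' : ∀ z ∈ D, ∃ j, z ∈ P j := by
    intro z hz
    rw [hcover] at hz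
    exact mem_iUnion.1 hz
  constructor
  · intro i
    show f x ≤ quadF (Qm i) (c i) (α i) x +
        dist1 x (P i) *
          (Finset.univ.sup' Finset.univ_nonempty
            (fun j => n1 (gradQ (Qm j) (c j) x - gradQ (Qm i) (c i) x))) +
        (3 * Li i / 2) * (dist1 x (P i)) ^ 2
    set M : ℝ := Finset.univ.sup' Finset.univ_nonempty
      (fun j => n1 (gradQ (Qm j) (c j) x - gradQ (Qm i) (c i) x)) with hMdef
    have hM : ∀ j, n1 (gradQ (Qm j) (c j) x - gradQ (Qm i) (c i) x) ≤ M := by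
      intro j
      rw [hMdef]
      exact Finset.le_sup' (fun j => n1 (gradQ (Qm j) (c j) x - gradQ (Qm i) (c i) x))
        (Finset.mem_univ j)
    have hM0 : 0 ≤ M := by
      have h := hM i
      rwa [sub_self, n1_zero] at h
    by_cases hxi : x ∈ P i
    · rw [dist1_eq_zero hxi, hfq i x hxi]
      simp
    · -- x ∉ P i
      obtain ⟨y₀, hy₀⟩ := hne i
      have hyx : y₀ ≠ x := fun h => hxi (h ▸ hy₀)
      have hL0 : ∀ j, 0 ≤ L j i := by
        intro j
        have h := hL j i x hx y₀ (hPD i hy₀)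
        have hpos : 0 < n2 (x - y₀) := n2_pos (sub_ne_zero.2 (Ne.symm hyx))
        nlinarith [n2_nonneg ((gradQ (Qm j) (c j) x - gradQ (Qm i) (c i) x) -
          (gradQ (Qm j) (c j) y₀ - gradQ (Qm i) (c i) y₀))]
      have hΛ : ∀ j, L j i ≤ Li i := by
        intro j
        rw [hLi]
        exact Finset.le_sup' (fun j => L j i) (Finset.mem_univ j)
      have hLi0 : 0 ≤ Li i := le_trans (hL0 i) (hΛ i)
      set d : ℝ := dist1 x (P i) with hddef
      have hd0 : 0 ≤ d := dist1_nonneg x (hne i)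
      have hstep : ∀ ε > (0:ℝ), f x ≤ quadF (Qm i) (c i) (α i) x
          + M * (d + ε) + Li i * (d + ε) ^ 2 := by
        intro ε hε
        obtain ⟨y, hy, hlt⟩ := dist1_approx x (hne i) hε
        have hk := key_bound hD.convex (fun j => (hP j).closed) (fun j => (hP j).convex)
          hPD hcov' hQ hf hfq hL i hx hy hM hM0 hΛ hLi0
        have h1 : 0 ≤ n1 (y - x) := n1_nonneg _
        have h2 : M * n1 (y - x) ≤ M * (d + ε) := mul_le_mul_of_nonneg_left hlt.le hM0
        have h3 : Li i * n1 (y - x) ^ 2 ≤ Li i * (d + ε) ^ 2 :=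
          mul_le_mul_of_nonneg_left (pow_le_pow_left₀ h1 hlt.le 2) hLi0
        linarith
      have hlim : f x ≤ quadF (Qm i) (c i) (α i) x + M * d + Li i * d ^ 2 := by
        have hcont : Continuous (fun ε : ℝ => quadF (Qm i) (c i) (α i) x
            + M * (d + ε) + Li i * (d + ε) ^ 2) := by
          apply Continuous.add
          · exact continuous_const.add (continuous_const.mul
              (continuous_const.add continuous_id))
          · exact continuous_const.mul ((continuous_const.add continuous_id).pow 2)
        have hT := (hcont.tendsto 0).mono_left (nhdsWithin_le_nhds (s := Ioi (0:ℝ)))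
        simp only [add_zero] at hT
        exact ge_of_tendsto hT (eventually_nhdsWithin_of_forall fun ε hε => hstep ε hε)
      have hfinal : Li i * d ^ 2 ≤ (3 * Li i / 2) * d ^ 2 := by
        nlinarith [mul_nonneg hLi0 (sq_nonneg d)]
      calc f x ≤ quadF (Qm i) (c i) (α i) x + M * d + Li i * d ^ 2 := hlim
        _ ≤ quadF (Qm i) (c i) (α i) x + d * M + (3 * Li i / 2) * d ^ 2 := by
            rw [mul_comm M d]; linarith
  · obtain ⟨k, hk⟩ := hcov' x hx
    refine ⟨k, ?_⟩
    show f x = quadF (Qm k) (c k) (α k) x +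
        dist1 x (P k) *
          (Finset.univ.sup' Finset.univ_nonempty
            (fun j => n1 (gradQ (Qm j) (c j) x - gradQ (Qm k) (c k) x))) +
        (3 * Li k / 2) * (dist1 x (P k)) ^ 2
    rw [dist1_eq_zero hk, hfq k x hk]
    ring
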